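/- Let p, q be elements of an associative algebra over \mathbb{C} with pq - qp = c for a central scalar c. Then for all m, n \ge 0: {p^n/n!, q^m/m!} = (2/c)[p^{n+1}/(n+1)!, q^{m+1}/(m+1)!] + 2\sum_{k=1}^{\min(m,n)} (c^k/k!) (B_{k+1}/(k+1)) [p^{n-k}/(n-k)!, q^{m-k}/(m-k)!], where B_j are the Bernoulli numbers. -/

import Mathlib

open Finset



-- commutation: p * q^m = q^m * p + m c • q^(m-1)
theorem L1 {A : Type*} [Ring A] [Algebra ℂ A] (p q : A) (c : ℂ)
    (h : p * q - q * p = algebraMap ℂ A c) :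
    ∀ a : ℕ, p * q ^ a = q ^ a * p + ((a : ℂ) * c) • q ^ (a - 1) := by
  have hpq : p * q = q * p + c • (1 : A) := by
    rw [Algebra.algebraMap_eq_smul_one] at h
    linear_combination (norm := module) h
  intro a
  induction a with
  | zero => simp
  | succ a ih =>
    rw [pow_succ, ← mul_assoc, ih]
    cases a with
    | zero => simpa using hpq
    | succ a =>
      simp only [Nat.add_sub_cancel]
      rw [add_mul, smul_mul_assoc, mul_assoc, hpq, mul_add, mul_smul_comm, mul_one,
        ← mul_assoc, ← pow_succ, ← pow_succ]
      push_cast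
      match_scalars <;> ring

theorem natid (n m j : ℕ) :
    (n+1).choose (j+1) * m.choose (j+1) * (j+1).factorial =
      n.choose (j+1) * m.choose (j+1) * (j+1).factorial +
        n.choose j * m.choose j * j.factorial * (m - j) := by
  have h1 : m.choose j * (m - j) = m.choose (j+1) * (j+1) := (Nat.choose_succ_right_eq m j).symm
  have h2 : (n+1).choose (j+1) = n.choose j + n.choose (j+1) := Nat.choose_succ_succ n j
  rw [h2]
  have : n.choose j * m.choose j * j.factorial * (m - j)
      = n.choose j * (m.choose j * (m - j)) * j.factorial := by ring
  rw [this, h1, Nat.factorial_succ]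
  ring

theorem L2 {A : Type*} [Ring A] [Algebra ℂ A] (p q : A) (c : ℂ)
    (h : p * q - q * p = algebraMap ℂ A c) :
    ∀ n m : ℕ, p ^ n * q ^ m = ∑ k ∈ range (n+1),
      (((n.choose k * m.choose k * k.factorial : ℕ) : ℂ) * c ^ k) • (q ^ (m-k) * p ^ (n-k)) := by
  intro n
  induction n with
  | zero => intro m; simp
  | succ n ih =>
    intro m
    rw [pow_succ', mul_assoc, ih m, Finset.mul_sum]
    have step : ∀ k ∈ range (n+1),
        p * ((((n.choose k * m.choose k * k.factorial : ℕ) : ℂ) * c ^ k) • (q ^ (m-k) * p ^ (n-k)))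
        = (((n.choose k * m.choose k * k.factorial : ℕ) : ℂ) * c ^ k) • (q ^ (m-k) * p ^ (n+1-k))
          + ((((n.choose k * m.choose k * k.factorial : ℕ) : ℂ) * c ^ k) * (((m-k : ℕ) : ℂ) * c)) •
            (q ^ (m-k-1) * p ^ (n-k)) := by
      intro k hk
      have hk' : k ≤ n := Nat.lt_succ_iff.mp (mem_range.mp hk)
      rw [mul_smul_comm, ← mul_assoc, L1 p q c h (m-k), add_mul, smul_mul_assoc, mul_assoc (q ^ (m-k)) p (p ^ (n-k)),
        ← pow_succ']
      have : n - k + 1 = n + 1 - k := by omega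
      rw [this, smul_add, smul_smul]
    rw [Finset.sum_congr rfl step, Finset.sum_add_distrib]
    have hz : (∑ k ∈ range (n+1),
        (((n.choose k * m.choose k * k.factorial : ℕ) : ℂ) * c ^ k) • (q ^ (m-k) * p ^ (n+1-k)))
      = ∑ k ∈ range (n+2),
        (((n.choose k * m.choose k * k.factorial : ℕ) : ℂ) * c ^ k) • (q ^ (m-k) * p ^ (n+1-k)) := by
      have h0 : ((n.choose (n+1) * m.choose (n+1) * (n+1).factorial : ℕ) : ℂ) = 0 := by
        simp [Nat.choose_succ_self]
      rw [Finset.sum_range_succ _ (n+1), h0, zero_mul, zero_smul, add_zero]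
    rw [hz, Finset.sum_range_succ', Finset.sum_range_succ' _ (n+1)]
    simp only [Nat.succ_sub_succ_eq_sub, Nat.sub_sub, Nat.sub_zero, Nat.choose_zero_right,
      Nat.factorial_zero, pow_zero, one_mul, mul_one, Nat.cast_one]
    rw [add_right_comm, ← Finset.sum_add_distrib]
    congr 1
    apply Finset.sum_congr rfl
    intro i hi
    rw [← add_smul]
    congr 1
    have hnat := natid n m i
    have hC : (((n+1).choose (i+1) * m.choose (i+1) * (i+1).factorial : ℕ) : ℂ)
        = ((n.choose (i+1) * m.choose (i+1) * (i+1).factorial : ℕ) : ℂ)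
          + ((n.choose i * m.choose i * i.factorial : ℕ) : ℂ) * ((m - i : ℕ) : ℂ) := by
      exact_mod_cast congrArg (Nat.cast : ℕ → ℂ) hnat
    rw [hC]
    ring


theorem Bq (t : ℕ) (ht : 1 ≤ t) :
    (1:ℚ)/t.factorial = 2/(t+1).factorial
      + 2 * ∑ k ∈ Icc 1 (t-1),
          (bernoulli (k+1) : ℚ)/(k.factorial * (k+1) * (t-k).factorial) := by
  obtain ⟨s, rfl⟩ : ∃ s, t = s + 1 := ⟨t-1, by omega⟩
  have hs := sum_bernoulli (s+2)
  rw [if_neg (by omega)] at hs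
  rw [Finset.sum_range_succ', Finset.sum_range_succ'] at hs
  simp only [bernoulli_zero, bernoulli_one, Nat.choose_zero_right, Nat.choose_one_right,
    Nat.cast_one, Nat.cast_ofNat, mul_one, Nat.cast_add, zero_add, add_assoc, Nat.reduceAdd] at hs
  have hs' : ∑ i ∈ range s, ((s+2).choose (i+2) : ℚ) * bernoulli (i+2) = s/2 := by
    field_simp at hs ⊢
    linarith [hs]
  have hIcc : ∑ k ∈ Icc 1 (s+1-1),
      (bernoulli (k+1) : ℚ)/(k.factorial * (k+1) * (s+1-k).factorial)
      = ∑ i ∈ range s, (bernoulli (i+2) : ℚ)/((1+i).factorial * ((i:ℚ)+2) * (s-i).factorial) := by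
    rw [← Finset.Ico_add_one_right_eq_Icc, Finset.sum_Ico_eq_sum_range]
    apply Finset.sum_congr (by congr 1 <;> omega)
    intro i hi
    have e1 : 1 + i + 1 = i + 2 := by omega
    have e2 : s + 1 - (1 + i) = s - i := by omega
    rw [e1, e2]
    push_cast
    ring_nf
  rw [hIcc]
  have hterm : ∀ i ∈ range s, (bernoulli (i+2) : ℚ)/((1+i).factorial * ((i:ℚ)+2) * (s-i).factorial)
      = ((s+2).choose (i+2) : ℚ) * bernoulli (i+2) / (s+2).factorial := by
    intro i hi
    have hle : i + 2 ≤ s + 2 := by simp at hi; omega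
    have key : (s+2).choose (i+2) * (i+2).factorial * (s-i).factorial = (s+2).factorial := by
      have := Nat.choose_mul_factorial_mul_factorial hle
      simpa [show s + 2 - (i+2) = s - i by omega] using this
    have keyQ : ((s+2).choose (i+2) : ℚ) * (i+2).factorial * (s-i).factorial
        = (s+2).factorial := by exact_mod_cast congrArg (Nat.cast : ℕ → ℚ) key
    have hfact : ((i+2).factorial : ℚ) = (1+i).factorial * ((i:ℚ)+2) := by
      have : (i+2).factorial = (i+1).factorial * (i+2) := by
        rw [Nat.factorial_succ]; ring
      rw [show (1+i) = i+1 by ring, this]; push_cast; ring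
    rw [div_eq_div_iff (by positivity) (by positivity), ← hfact]
    linear_combination (-(bernoulli (i+2) : ℚ)) * keyQ
  rw [Finset.sum_congr rfl hterm, ← Finset.sum_div, hs']
  have h1 : ((s+1).factorial : ℚ) ≠ 0 := by positivity
  have h2 : ((s+2).factorial : ℚ) ≠ 0 := by positivity
  have h3 : ((s+2).factorial : ℚ) = (s+2) * (s+1).factorial := by
    rw [show s+2 = (s+1)+1 from rfl, Nat.factorial_succ]; push_cast; ring
  field_simp
  rw [h3]; ring



theorem Bc (t : ℕ) (ht : 1 ≤ t) :
    (1:ℂ)/t.factorial = 2/(t+1).factorial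
      + 2 * ∑ k ∈ Icc 1 (t-1),
          ((bernoulli (k+1) : ℚ) : ℂ)/(k.factorial * ((k:ℂ)+1) * (t-k).factorial) := by
  have h := congrArg (Rat.cast : ℚ → ℂ) (Bq t ht)
  push_cast at h
  convert h using 3

set_option maxHeartbeats 1000000 in
theorem coeff_id (c : ℂ) (hc : c ≠ 0) (m n t : ℕ) (ht : t ≤ n) :
    (((n.factorial : ℂ) * (m.factorial : ℂ))⁻¹ * (((n.choose t * m.choose t * t.factorial : ℕ) : ℂ) * c ^ t)
      + (if t = 0 then ((n.factorial : ℂ) * (m.factorial : ℂ))⁻¹ else 0))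
    = (2 / (c * ((n + 1).factorial : ℂ) * ((m + 1).factorial : ℂ)))
        * ((((n+1).choose (t+1) * (m+1).choose (t+1) * (t+1).factorial : ℕ) : ℂ) * c ^ (t+1))
      + ∑ k ∈ Icc 1 (min m n), (if k < t then
          (2 * c ^ k * ((bernoulli (k + 1) : ℚ) : ℂ) /
              ((k.factorial : ℂ) * ((k : ℂ) + 1) *
                ((n - k).factorial : ℂ) * ((m - k).factorial : ℂ)))
            * ((((n-k).choose (t-k) * (m-k).choose (t-k) * (t-k).factorial : ℕ) : ℂ) * c ^ (t-k))
          else 0) := by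
  have hfne : ∀ j : ℕ, ((j.factorial : ℂ)) ≠ 0 := fun j => by
    exact_mod_cast Nat.cast_ne_zero.mpr (Nat.factorial_ne_zero j)
  rcases Nat.eq_zero_or_pos t with rfl | htpos
  · -- t = 0
    have hsum : ∑ k ∈ Icc 1 (min m n), (if k < 0 then
          (2 * c ^ k * ((bernoulli (k + 1) : ℚ) : ℂ) /
              ((k.factorial : ℂ) * ((k : ℂ) + 1) *
                ((n - k).factorial : ℂ) * ((m - k).factorial : ℂ)))
            * ((((n-k).choose (0-k) * (m-k).choose (0-k) * (0-k).factorial : ℕ) : ℂ) * c ^ (0-k))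
          else 0) = 0 := by
      apply Finset.sum_eq_zero; intro k hk; simp
    rw [hsum, add_zero, if_pos rfl]
    have hn1 : ((n+1).factorial : ℂ) = ((n:ℂ)+1) * n.factorial := by
      rw [Nat.factorial_succ]; push_cast; ring
    have hm1 : ((m+1).factorial : ℂ) = ((m:ℂ)+1) * m.factorial := by
      rw [Nat.factorial_succ]; push_cast; ring
    simp only [zero_add, Nat.choose_zero_right, Nat.choose_one_right, Nat.factorial_zero, Nat.factorial_one,
      pow_zero, pow_one]
    push_cast
    rw [hn1, hm1]
    have h1 := hfne n; have h2 := hfne m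
    have hn0 : ((n:ℂ)+1) ≠ 0 := by
      exact_mod_cast (Nat.cast_ne_zero (R := ℂ)).mpr (Nat.succ_ne_zero n)
    have hm0 : ((m:ℂ)+1) ≠ 0 := by
      exact_mod_cast (Nat.cast_ne_zero (R := ℂ)).mpr (Nat.succ_ne_zero m)
    field_simp
    ring
  rcases le_or_gt t m with htm | hmt
  · -- main case 1 ≤ t ≤ m, t ≤ n
    have htK : t ≤ min m n := le_min htm ht
    -- convert the ite-sum to a sum over Icc 1 (t-1)
    have hfilter : ∑ k ∈ Icc 1 (min m n), (if k < t then
          (2 * c ^ k * ((bernoulli (k + 1) : ℚ) : ℂ) /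
              ((k.factorial : ℂ) * ((k : ℂ) + 1) *
                ((n - k).factorial : ℂ) * ((m - k).factorial : ℂ)))
            * ((((n-k).choose (t-k) * (m-k).choose (t-k) * (t-k).factorial : ℕ) : ℂ) * c ^ (t-k))
          else 0)
        = ∑ k ∈ Icc 1 (t-1),
          (2 * c ^ k * ((bernoulli (k + 1) : ℚ) : ℂ) /
              ((k.factorial : ℂ) * ((k : ℂ) + 1) *
                ((n - k).factorial : ℂ) * ((m - k).factorial : ℂ)))
            * ((((n-k).choose (t-k) * (m-k).choose (t-k) * (t-k).factorial : ℕ) : ℂ) * c ^ (t-k)) := by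
      rw [← Finset.sum_filter]
      apply Finset.sum_congr _ (fun _ _ => rfl)
      ext k
      simp only [Finset.mem_filter, Finset.mem_Icc, le_min_iff]
      omega
    rw [hfilter]
    have hterm : ∀ k ∈ Icc 1 (t-1),
        (2 * c ^ k * ((bernoulli (k + 1) : ℚ) : ℂ) /
              ((k.factorial : ℂ) * ((k : ℂ) + 1) *
                ((n - k).factorial : ℂ) * ((m - k).factorial : ℂ)))
            * ((((n-k).choose (t-k) * (m-k).choose (t-k) * (t-k).factorial : ℕ) : ℂ) * c ^ (t-k))
        = (2 * c ^ t / (((n-t).factorial : ℂ) * ((m-t).factorial : ℂ)))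
            * (((bernoulli (k + 1) : ℚ) : ℂ) / ((k.factorial : ℂ) * ((k:ℂ)+1) * ((t-k).factorial : ℂ))) := by
      intro k hk
      simp only [Finset.mem_Icc] at hk
      obtain ⟨hk1, hk2⟩ := hk
      have hkt : k < t := by omega
      have hc1 : ((n-k).choose (t-k) : ℂ) * ((t-k).factorial : ℂ) * ((n-t).factorial : ℂ)
          = ((n-k).factorial : ℂ) := by
        have := Nat.choose_mul_factorial_mul_factorial (show t - k ≤ n - k by omega)
        rw [show n - k - (t - k) = n - t by omega] at this
        exact_mod_cast congrArg (Nat.cast : ℕ → ℂ) this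
      have hc2 : ((m-k).choose (t-k) : ℂ) * ((t-k).factorial : ℂ) * ((m-t).factorial : ℂ)
          = ((m-k).factorial : ℂ) := by
        have := Nat.choose_mul_factorial_mul_factorial (show t - k ≤ m - k by omega)
        rw [show m - k - (t - k) = m - t by omega] at this
        exact_mod_cast congrArg (Nat.cast : ℕ → ℂ) this
      have hct : c ^ k * c ^ (t-k) = c ^ t := by
        rw [← pow_add]; congr 1; omega
      have hc12 : ((n-k).choose (t-k) : ℂ) * ((t-k).factorial : ℂ) * ((n-t).factorial : ℂ)
            * (((m-k).choose (t-k) : ℂ) * ((t-k).factorial : ℂ) * ((m-t).factorial : ℂ))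
          = ((n-k).factorial : ℂ) * ((m-k).factorial : ℂ) := by rw [hc1, hc2]
      have h1 := hfne k; have h2 := hfne (t-k); have h3 := hfne (n-k); have h4 := hfne (m-k)
      have h5 := hfne (n-t); have h6 := hfne (m-t)
      have h7 : ((k:ℂ)+1) ≠ 0 := by
        exact_mod_cast (Nat.cast_ne_zero (R := ℂ)).mpr (Nat.succ_ne_zero k)
      push_cast
      rw [div_mul_eq_mul_div, div_mul_div_comm, div_eq_div_iff
        (by exact mul_ne_zero (mul_ne_zero (mul_ne_zero h1 h7) h3) h4)
        (by exact mul_ne_zero (mul_ne_zero h5 h6) (mul_ne_zero (mul_ne_zero h1 h7) h2)),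
        ← hct]
      linear_combination (2*c^k*c^(t-k)*((bernoulli (k+1) : ℚ) : ℂ)*(k.factorial : ℂ)*((k:ℂ)+1)) * hc12
    rw [Finset.sum_congr rfl hterm, ← Finset.mul_sum]
    have hB := Bc t htpos
    -- outer choose facts
    have e1 : ((n.choose t : ℂ)) * (t.factorial : ℂ) * ((n-t).factorial : ℂ) = (n.factorial : ℂ) := by
      exact_mod_cast congrArg (Nat.cast : ℕ → ℂ) (Nat.choose_mul_factorial_mul_factorial ht)
    have e2 : ((m.choose t : ℂ)) * (t.factorial : ℂ) * ((m-t).factorial : ℂ) = (m.factorial : ℂ) := by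
      exact_mod_cast congrArg (Nat.cast : ℕ → ℂ) (Nat.choose_mul_factorial_mul_factorial htm)
    have e3 : (((n+1).choose (t+1) : ℂ)) * ((t+1).factorial : ℂ) * ((n-t).factorial : ℂ)
        = ((n+1).factorial : ℂ) := by
      have := Nat.choose_mul_factorial_mul_factorial (show t+1 ≤ n+1 by omega)
      rw [show n + 1 - (t + 1) = n - t by omega] at this
      exact_mod_cast congrArg (Nat.cast : ℕ → ℂ) this
    have e4 : (((m+1).choose (t+1) : ℂ)) * ((t+1).factorial : ℂ) * ((m-t).factorial : ℂ)
        = ((m+1).factorial : ℂ) := by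
      have := Nat.choose_mul_factorial_mul_factorial (show t+1 ≤ m+1 by omega)
      rw [show m + 1 - (t + 1) = m - t by omega] at this
      exact_mod_cast congrArg (Nat.cast : ℕ → ℂ) this
    have hCn : ((n.choose t : ℂ)) = (n.factorial : ℂ) / ((t.factorial : ℂ) * ((n-t).factorial : ℂ)) := by
      rw [eq_div_iff (mul_ne_zero (hfne t) (hfne (n-t)))]; linear_combination e1
    have hCm : ((m.choose t : ℂ)) = (m.factorial : ℂ) / ((t.factorial : ℂ) * ((m-t).factorial : ℂ)) := by
      rw [eq_div_iff (mul_ne_zero (hfne t) (hfne (m-t)))]; linear_combination e2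
    have hCn1 : (((n+1).choose (t+1) : ℂ)) = ((n+1).factorial : ℂ) / (((t+1).factorial : ℂ) * ((n-t).factorial : ℂ)) := by
      rw [eq_div_iff (mul_ne_zero (hfne (t+1)) (hfne (n-t)))]; linear_combination e3
    have hCm1 : (((m+1).choose (t+1) : ℂ)) = ((m+1).factorial : ℂ) / (((t+1).factorial : ℂ) * ((m-t).factorial : ℂ)) := by
      rw [eq_div_iff (mul_ne_zero (hfne (t+1)) (hfne (m-t)))]; linear_combination e4
    rw [if_neg (by omega)]
    push_cast
    rw [hCn, hCm, hCn1, hCm1]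
    have hS : (∑ k ∈ Icc 1 (t-1),
          ((bernoulli (k + 1) : ℚ) : ℂ) / ((k.factorial : ℂ) * ((k:ℂ)+1) * ((t-k).factorial : ℂ)))
        = ((1:ℂ)/t.factorial - 2/(t+1).factorial)/2 := by
      linear_combination (-1/2 : ℂ) * hB
    rw [hS]
    have h1 := hfne n; have h2 := hfne m; have h3 := hfne (n+1); have h4 := hfne (m+1)
    have h5 := hfne t; have h6 := hfne (t+1); have h7 := hfne (n-t); have h8 := hfne (m-t)
    have E1 : ((n.factorial : ℂ) * m.factorial)⁻¹ *
          (((n.factorial : ℂ) / ((t.factorial : ℂ) * ((n-t).factorial : ℂ)))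
            * (((m.factorial : ℂ)) / ((t.factorial : ℂ) * ((m-t).factorial : ℂ)))
            * (t.factorial : ℂ) * c ^ t)
        = c ^ t / ((t.factorial : ℂ) * ((n-t).factorial : ℂ) * ((m-t).factorial : ℂ)) := by
      field_simp
    have E2 : 2 / (c * ((n+1).factorial : ℂ) * ((m+1).factorial : ℂ)) *
          ((((n+1).factorial : ℂ) / (((t+1).factorial : ℂ) * ((n-t).factorial : ℂ)))
            * ((((m+1).factorial : ℂ)) / (((t+1).factorial : ℂ) * ((m-t).factorial : ℂ)))
            * ((t+1).factorial : ℂ) * c ^ (t+1))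
        = 2 * c ^ t / (((t+1).factorial : ℂ) * ((n-t).factorial : ℂ) * ((m-t).factorial : ℂ)) := by
      rw [pow_succ]; field_simp
    have E3 : 2 * c ^ t / (((n-t).factorial : ℂ) * ((m-t).factorial : ℂ)) *
          (((1:ℂ)/t.factorial - 2/(t+1).factorial)/2)
        = c ^ t / ((t.factorial : ℂ) * ((n-t).factorial : ℂ) * ((m-t).factorial : ℂ))
          - 2 * c ^ t / (((t+1).factorial : ℂ) * ((n-t).factorial : ℂ) * ((m-t).factorial : ℂ)) := by
      field_simp
    linear_combination E1 - E2 - E3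
  · -- t > m
    rw [if_neg (by omega)]
    have hz1 : (m.choose t : ℕ) = 0 := Nat.choose_eq_zero_of_lt hmt
    have hz2 : ((m+1).choose (t+1) : ℕ) = 0 := Nat.choose_eq_zero_of_lt (by omega)
    have hsum : ∑ k ∈ Icc 1 (min m n), (if k < t then
          (2 * c ^ k * ((bernoulli (k + 1) : ℚ) : ℂ) /
              ((k.factorial : ℂ) * ((k : ℂ) + 1) *
                ((n - k).factorial : ℂ) * ((m - k).factorial : ℂ)))
            * ((((n-k).choose (t-k) * (m-k).choose (t-k) * (t-k).factorial : ℕ) : ℂ) * c ^ (t-k))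
          else 0) = 0 := by
      apply Finset.sum_eq_zero
      intro k hk
      simp only [Finset.mem_Icc] at hk
      have : (m-k).choose (t-k) = 0 := Nat.choose_eq_zero_of_lt (by omega)
      rw [if_pos (by omega), this]
      simp
    rw [hsum, hz1, hz2]
    simp


set_option maxHeartbeats 1600000 in
theorem pain_anticommutator_identity {A : Type*} [Ring A] [Algebra ℂ A]
    (p q : A) (c : ℂ) (hc : c ≠ 0) (h : p * q - q * p = algebraMap ℂ A c)
    (m n : ℕ) :
    (((n.factorial : ℂ) * (m.factorial : ℂ))⁻¹) • (p ^ n * q ^ m + q ^ m * p ^ n) =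
      (2 / (c * ((n + 1).factorial : ℂ) * ((m + 1).factorial : ℂ))) •
          (p ^ (n + 1) * q ^ (m + 1) - q ^ (m + 1) * p ^ (n + 1)) +
        ∑ k ∈ Finset.Icc 1 (min m n),
          (2 * c ^ k * ((bernoulli (k + 1) : ℚ) : ℂ) /
              ((k.factorial : ℂ) * ((k : ℂ) + 1) *
                ((n - k).factorial : ℂ) * ((m - k).factorial : ℂ))) •
            (p ^ (n - k) * q ^ (m - k) - q ^ (m - k) * p ^ (n - k)) := by
  have hL2 := L2 p q c h
  have piece1 : (((n.factorial : ℂ) * (m.factorial : ℂ))⁻¹) • (p ^ n * q ^ m + q ^ m * p ^ n)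
      = ∑ t ∈ range (n+1),
          (((n.factorial : ℂ) * (m.factorial : ℂ))⁻¹ *
              (((n.choose t * m.choose t * t.factorial : ℕ) : ℂ) * c ^ t)
            + (if t = 0 then ((n.factorial : ℂ) * (m.factorial : ℂ))⁻¹ else 0))
            • (q ^ (m-t) * p ^ (n-t)) := by
    have expand : ∑ t ∈ range (n+1),
          (((n.factorial : ℂ) * (m.factorial : ℂ))⁻¹ *
              (((n.choose t * m.choose t * t.factorial : ℕ) : ℂ) * c ^ t)
            + (if t = 0 then ((n.factorial : ℂ) * (m.factorial : ℂ))⁻¹ else 0))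
            • (q ^ (m-t) * p ^ (n-t))
        = (∑ t ∈ range (n+1), (((n.factorial : ℂ) * (m.factorial : ℂ))⁻¹ *
              (((n.choose t * m.choose t * t.factorial : ℕ) : ℂ) * c ^ t)) • (q ^ (m-t) * p ^ (n-t)))
          + ∑ t ∈ range (n+1), (if t = 0 then
              ((n.factorial : ℂ) * (m.factorial : ℂ))⁻¹ • (q ^ m * p ^ n) else 0) := by
      rw [← Finset.sum_add_distrib]
      refine Finset.sum_congr rfl fun t ht => ?_
      rw [add_smul, ite_smul, zero_smul]
      congr 1
      split
      · next h0 => subst h0; rfl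
      · rfl
    rw [expand, Finset.sum_ite_eq' (range (n+1)) 0
        (fun _ => ((n.factorial : ℂ) * (m.factorial : ℂ))⁻¹ • (q ^ m * p ^ n)),
      if_pos (Finset.mem_range.mpr (Nat.succ_pos n))]
    rw [hL2 n m, smul_add, Finset.smul_sum]
    congr 1
    exact Finset.sum_congr rfl fun t ht => by rw [smul_smul]
  have piece2 : (2 / (c * ((n + 1).factorial : ℂ) * ((m + 1).factorial : ℂ))) •
          (p ^ (n + 1) * q ^ (m + 1) - q ^ (m + 1) * p ^ (n + 1))
      = ∑ t ∈ range (n+1),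
          ((2 / (c * ((n + 1).factorial : ℂ) * ((m + 1).factorial : ℂ))) *
            ((((n+1).choose (t+1) * (m+1).choose (t+1) * (t+1).factorial : ℕ) : ℂ) * c ^ (t+1)))
            • (q ^ (m-t) * p ^ (n-t)) := by
    rw [hL2 (n+1) (m+1), Finset.sum_range_succ']
    simp only [Nat.add_sub_add_right, Nat.sub_zero, Nat.choose_zero_right, Nat.factorial_zero,
      mul_one, one_mul, Nat.cast_one, pow_zero, one_smul]
    rw [add_sub_cancel_right, Finset.smul_sum]
    exact Finset.sum_congr rfl fun t ht => by rw [smul_smul]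
  have piece3 : ∑ k ∈ Finset.Icc 1 (min m n),
          (2 * c ^ k * ((bernoulli (k + 1) : ℚ) : ℂ) /
              ((k.factorial : ℂ) * ((k : ℂ) + 1) *
                ((n - k).factorial : ℂ) * ((m - k).factorial : ℂ))) •
            (p ^ (n - k) * q ^ (m - k) - q ^ (m - k) * p ^ (n - k))
      = ∑ t ∈ range (n+1),
          (∑ k ∈ Finset.Icc 1 (min m n), (if k < t then
            (2 * c ^ k * ((bernoulli (k + 1) : ℚ) : ℂ) /
              ((k.factorial : ℂ) * ((k : ℂ) + 1) *
                ((n - k).factorial : ℂ) * ((m - k).factorial : ℂ)))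
            * ((((n-k).choose (t-k) * (m-k).choose (t-k) * (t-k).factorial : ℕ) : ℂ) * c ^ (t-k))
            else 0)) • (q ^ (m-t) * p ^ (n-t)) := by
    have step : ∀ k ∈ Finset.Icc 1 (min m n),
        (∑ t ∈ range (n+1), (if k < t then
            (2 * c ^ k * ((bernoulli (k + 1) : ℚ) : ℂ) /
              ((k.factorial : ℂ) * ((k : ℂ) + 1) *
                ((n - k).factorial : ℂ) * ((m - k).factorial : ℂ)))
            * ((((n-k).choose (t-k) * (m-k).choose (t-k) * (t-k).factorial : ℕ) : ℂ) * c ^ (t-k))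
            else 0) • (q ^ (m-t) * p ^ (n-t)))
        = (2 * c ^ k * ((bernoulli (k + 1) : ℚ) : ℂ) /
              ((k.factorial : ℂ) * ((k : ℂ) + 1) *
                ((n - k).factorial : ℂ) * ((m - k).factorial : ℂ))) •
            (p ^ (n - k) * q ^ (m - k) - q ^ (m - k) * p ^ (n - k)) := by
      intro k hk
      simp only [Finset.mem_Icc, le_min_iff] at hk
      have hk1 := hk.1; have hkm := hk.2.1; have hkn := hk.2.2
      have hfil : Finset.filter (fun t => k < t) (range (n+1)) = Finset.Ico (k+1) (n+1) := by
        ext x; simp only [Finset.mem_filter, Finset.mem_range, Finset.mem_Ico]; omega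
      simp only [ite_smul, zero_smul]
      rw [← Finset.sum_filter, hfil, Finset.sum_Ico_eq_sum_range]
      simp only [Nat.add_sub_add_right]
      rw [hL2 (n-k) (m-k), Finset.sum_range_succ']
      simp only [Nat.sub_zero, Nat.choose_zero_right, Nat.factorial_zero,
        mul_one, one_mul, Nat.cast_one, pow_zero, one_smul]
      rw [add_sub_cancel_right, Finset.smul_sum]
      refine Finset.sum_congr rfl fun j hj => ?_
      rw [show k + 1 + j - k = j + 1 from by omega,
        show m - (k + 1 + j) = m - k - (j + 1) from by omega,
        show n - (k + 1 + j) = n - k - (j + 1) from by omega, smul_smul]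
    rw [Finset.sum_congr rfl (fun k hk => (step k hk).symm), Finset.sum_comm]
    exact Finset.sum_congr rfl fun t ht => by rw [Finset.sum_smul]
  rw [piece1, piece2, piece3, ← Finset.sum_add_distrib]
  refine Finset.sum_congr rfl fun t ht => ?_
  rw [← add_smul]
  congr 1
  exact coeff_id c hc m n t (Nat.lt_succ_iff.mp (Finset.mem_range.mp ht))
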